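/- Let N < N' be consecutive odd colossally abundant numbers (i.e., both are odd colossally abundant and no odd colossally abundant number lies strictly between them), and let A, α > 0 be real constants. If α·σ(N)/N ≤ A·log log N and α·σ(N')/N' ≤ A·log log N', then every odd integer n with N ≤ n ≤ N' satisfies α·σ(n)/n ≤ A·log log n. -/

import Mathlib

open Real Finset

/-- Sum of positive divisors of `n`. -/
def sigma (n : ℕ) : ℕ := ∑ d ∈ n.divisors, d

/-- An odd integer `N ≥ 3` is *odd colossally abundant* if there is `ε > 0` such that
`σ(n)/n^(1+ε) < σ(N)/N^(1+ε)` for every odd integer `n ≥ 3` with `n ≠ N`. -/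
def OddColossallyAbundant (N : ℕ) : Prop :=
  Odd N ∧ 3 ≤ N ∧ ∃ ε : ℝ, 0 < ε ∧ ∀ n : ℕ, Odd n → 3 ≤ n → n ≠ N →
    (sigma n : ℝ) / (n : ℝ) ^ (1 + ε) < (sigma N : ℝ) / (N : ℝ) ^ (1 + ε)

lemma sigma_pos' {m : ℕ} (hm : m ≠ 0) : 0 < sigma m :=
  Finset.sum_pos (fun i hi => Nat.pos_of_mem_divisors hi) (Nat.nonempty_divisors.mpr hm)

noncomputable def fca (m : ℕ) (e : ℝ) : ℝ := (sigma m : ℝ) / (m : ℝ) ^ (1 + e)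

lemma fca_pos {m : ℕ} (hm : m ≠ 0) (e : ℝ) : 0 < fca m e := by
  have h1 : (0:ℝ) < m := Nat.cast_pos.mpr (Nat.pos_of_ne_zero hm)
  have h2 : (0:ℝ) < sigma m := Nat.cast_pos.mpr (sigma_pos' hm)
  exact div_pos h2 (Real.rpow_pos_of_pos h1 _)

lemma fca_shift {m : ℕ} (hm : m ≠ 0) (e e' : ℝ) :
    fca m e = fca m e' * (m : ℝ) ^ (e' - e) := by
  have h1 : (0:ℝ) < m := Nat.cast_pos.mpr (Nat.pos_of_ne_zero hm)
  unfold fca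
  rw [div_mul_eq_mul_div, div_eq_div_iff (by positivity) (by positivity), mul_assoc,
    ← Real.rpow_add h1]
  congr 1
  ring

lemma fca_anti {m : ℕ} (hm : 1 ≤ m) {e e' : ℝ} (h : e ≤ e') : fca m e' ≤ fca m e := by
  have h1 : (1:ℝ) ≤ m := by exact_mod_cast hm
  have h2 : (0:ℝ) ≤ sigma m := by positivity
  exact div_le_div_of_nonneg_left h2 (Real.rpow_pos_of_pos (by linarith) _)
    (Real.rpow_le_rpow_of_exponent_le h1 (by linarith))

/-- If `m ≤ M`, `e ≤ e'`, and `fca m e' < fca M e'` then `fca m e < fca M e`. -/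
lemma fca_lt_of_le {m M : ℕ} (hm : m ≠ 0) (hmM : m ≤ M) {e e' : ℝ} (he : e ≤ e')
    (h : fca m e' < fca M e') : fca m e < fca M e := by
  have hM : M ≠ 0 := by omega
  have h1 : (0:ℝ) < m := Nat.cast_pos.mpr (Nat.pos_of_ne_zero hm)
  rw [fca_shift hm e e', fca_shift hM e e']
  have hp : (0:ℝ) < (m:ℝ) ^ (e' - e) := Real.rpow_pos_of_pos h1 _
  have h2 : ((m:ℝ)) ^ (e' - e) ≤ ((M:ℝ)) ^ (e' - e) :=
    Real.rpow_le_rpow h1.le (by exact_mod_cast hmM) (by linarith)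
  calc fca m e' * (m:ℝ) ^ (e' - e) < fca M e' * (m:ℝ) ^ (e' - e) := by
        exact mul_lt_mul_of_pos_right h hp
    _ ≤ fca M e' * (M:ℝ) ^ (e' - e) :=
        mul_le_mul_of_nonneg_left h2 (fca_pos hM e').le

/-- If `M ≤ m`, `e' ≤ e`, and `fca m e' < fca M e'` then `fca m e < fca M e`. -/
lemma fca_lt_of_ge {m M : ℕ} (hM : M ≠ 0) (hmM : M ≤ m) {e e' : ℝ} (he : e' ≤ e)
    (h : fca m e' < fca M e') : fca m e < fca M e := by
  have hm : m ≠ 0 := by omega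
  have hMp : (0:ℝ) < M := Nat.cast_pos.mpr (Nat.pos_of_ne_zero hM)
  rw [fca_shift hm e e', fca_shift hM e e']
  have hp : (0:ℝ) < (m:ℝ) ^ (e' - e) := Real.rpow_pos_of_pos (by
    have : (0:ℝ) < m := by positivity
    exact this) _
  have h2 : ((m:ℝ)) ^ (e' - e) ≤ ((M:ℝ)) ^ (e' - e) :=
    Real.rpow_le_rpow_of_nonpos hMp (by exact_mod_cast hmM) (by linarith)
  calc fca m e' * (m:ℝ) ^ (e' - e) < fca M e' * (m:ℝ) ^ (e' - e) :=
        mul_lt_mul_of_pos_right h hp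
    _ ≤ fca M e' * (M:ℝ) ^ (e' - e) :=
        mul_le_mul_of_nonneg_left h2 (fca_pos hM e').le

lemma sigma_le_mul (k : ℕ) : (sigma k : ℝ) ≤ k * (1 + Real.log k) := by
  rcases Nat.eq_zero_or_pos k with h | h
  · simp [h, sigma]
  have h0 : (sigma k : ℝ) = ∑ d ∈ k.divisors, ((k / d : ℕ) : ℝ) := by
    have := Nat.sum_div_divisors k id
    simp only [id] at this
    rw [sigma, ← this]
    push_cast
    rfl
  have h1 : ∑ d ∈ k.divisors, ((k / d : ℕ) : ℝ) ≤ ∑ d ∈ k.divisors, (k : ℝ) / d :=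
    Finset.sum_le_sum fun d _ => Nat.cast_div_le
  have h2 : ∑ d ∈ k.divisors, (k : ℝ) / d ≤ ∑ d ∈ Finset.Icc 1 k, (k : ℝ) / d := by
    apply Finset.sum_le_sum_of_subset_of_nonneg
    · intro d hd
      rw [Finset.mem_Icc]
      exact ⟨Nat.pos_of_mem_divisors hd, Nat.divisor_le hd⟩
    · intro d _ _
      positivity
  have h3 : ∑ d ∈ Finset.Icc 1 k, (k : ℝ) / d = k * ∑ d ∈ Finset.Icc 1 k, ((d:ℝ))⁻¹ := by
    rw [Finset.mul_sum]
    exact Finset.sum_congr rfl fun d _ => by rw [div_eq_mul_inv]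
  have h4 : ∑ d ∈ Finset.Icc 1 k, ((d:ℝ))⁻¹ = (harmonic k : ℝ) := by
    rw [harmonic_eq_sum_Icc]
    push_cast
    rfl
  have h5 : (harmonic k : ℝ) ≤ 1 + Real.log k := harmonic_le_one_add_log k
  have hk : (0:ℝ) ≤ k := by positivity
  calc (sigma k : ℝ) ≤ ∑ d ∈ Finset.Icc 1 k, (k : ℝ) / d := by
        rw [h0] at *; linarith
    _ = k * (harmonic k : ℝ) := by rw [h3, h4]
    _ ≤ k * (1 + Real.log k) := mul_le_mul_of_nonneg_left h5 hk

lemma fca_tail {r : ℝ} (hr : 0 < r) {c : ℝ} (hc : 0 < c) :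
    ∃ M : ℕ, ∀ k : ℕ, M < k → fca k r < c := by
  have t1 : Filter.Tendsto (fun x : ℝ => Real.log x / x ^ r) Filter.atTop (nhds 0) :=
    (isLittleO_log_rpow_atTop hr).tendsto_div_nhds_zero
  have t2 : Filter.Tendsto (fun x : ℝ => 1 / x ^ r) Filter.atTop (nhds 0) := by
    simpa [Real.rpow_neg_one] using
      ((tendsto_rpow_atTop hr).inv_tendsto_atTop : Filter.Tendsto (fun x : ℝ => (x ^ r)⁻¹)
        Filter.atTop (nhds 0)).congr (fun x => (one_div _).symm)
  have t3 : Filter.Tendsto (fun x : ℝ => (1 + Real.log x) / x ^ r) Filter.atTop (nhds 0) := by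
    have := t2.add t1
    simp only [add_zero] at this
    exact this.congr (fun x => by rw [← add_div])
  have t4 : Filter.Tendsto (fun k : ℕ => (1 + Real.log k) / (k:ℝ) ^ r) Filter.atTop (nhds 0) :=
    t3.comp tendsto_natCast_atTop_atTop
  have t5 := t4.eventually_lt_const hc
  rw [Filter.eventually_atTop] at t5
  obtain ⟨M, hM⟩ := t5
  refine ⟨M, fun k hk => ?_⟩
  have hk1 : 1 ≤ k := by omega
  have hkR : (1:ℝ) ≤ k := by exact_mod_cast hk1
  have hk0 : (0:ℝ) < k := by linarith
  have key : fca k r ≤ (1 + Real.log k) / (k:ℝ) ^ r := by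
    rw [fca]
    have hpow : (k:ℝ) ^ (1 + r) = k * (k:ℝ) ^ r := by
      rw [Real.rpow_add hk0, Real.rpow_one]
    rw [hpow]
    rw [div_le_div_iff₀ (by positivity) (by positivity)]
    calc (sigma k : ℝ) * (k:ℝ) ^ r ≤ (k * (1 + Real.log k)) * (k:ℝ) ^ r := by
          exact mul_le_mul_of_nonneg_right (sigma_le_mul k) (by positivity)
      _ = (1 + Real.log k) * (k * (k:ℝ) ^ r) := by ring
  exact lt_of_le_of_lt key (hM k (by omega))

lemma fca_continuous {m : ℕ} (hm : m ≠ 0) : Continuous (fun e => fca m e) := by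
  have h0 : (0:ℝ) < m := Nat.cast_pos.mpr (Nat.pos_of_ne_zero hm)
  have heq : (fun e => fca m e) = fun e => (sigma m : ℝ) / Real.exp (Real.log m * (1 + e)) := by
    funext e
    rw [fca, Real.rpow_def_of_pos h0]
  rw [heq]
  exact continuous_const.div
    (Real.continuous_exp.comp (continuous_const.mul (continuous_const.add continuous_id)))
    (fun x => (Real.exp_pos _).ne')

lemma log_fca {m : ℕ} (hm : m ≠ 0) (e : ℝ) :
    Real.log (fca m e) = Real.log (sigma m) - (1 + e) * Real.log m := by
  have h0 : (0:ℝ) < m := Nat.cast_pos.mpr (Nat.pos_of_ne_zero hm)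
  have hs : (0:ℝ) < sigma m := Nat.cast_pos.mpr (sigma_pos' hm)
  rw [fca, Real.log_div hs.ne' (Real.rpow_pos_of_pos h0 _).ne', Real.log_rpow h0]


theorem stmt_8 (N N' : ℕ) (hlt : N < N')
    (hN : OddColossallyAbundant N) (hN' : OddColossallyAbundant N')
    (hcons : ∀ m : ℕ, N < m → m < N' → ¬ OddColossallyAbundant m)
    (A α : ℝ) (hA : 0 < A) (hα : 0 < α)
    (h1 : α * ((sigma N : ℝ) / N) ≤ A * log (log N))
    (h2 : α * ((sigma N' : ℝ) / N') ≤ A * log (log N')) :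
    ∀ n : ℕ, Odd n → N ≤ n → n ≤ N' →
      α * ((sigma n : ℝ) / n) ≤ A * log (log n) := by
  obtain ⟨hNodd, hN3, ε, hε, hCA⟩ := hN
  obtain ⟨hN'odd, hN'3, ε', hε', hCA'⟩ := hN'
  have hN0 : N ≠ 0 := by omega
  have hN'0 : N' ≠ 0 := by omega
  have hN0R : (0:ℝ) < N := Nat.cast_pos.mpr (by omega)
  have hN'0R : (0:ℝ) < N' := Nat.cast_pos.mpr (by omega)
  have hNN'R : (N:ℝ) < N' := by exact_mod_cast hlt
  have hD : 0 < Real.log N' - Real.log N := by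
    have := Real.log_lt_log hN0R hNN'R
    linarith
  -- the two colossal-abundance inequalities, in `fca` form
  have P1 : fca N' ε < fca N ε := hCA N' hN'odd hN'3 (by omega)
  have P2 : fca N ε' < fca N' ε' := hCA' N hNodd hN3 (by omega)
  -- the crossover exponent
  set e0 : ℝ := (Real.log (sigma N') - Real.log (sigma N)) / (Real.log N' - Real.log N) - 1
    with he0def
  have hE0 : (1 + e0) * (Real.log N' - Real.log N)
      = Real.log (sigma N') - Real.log (sigma N) := by
    rw [he0def]
    field_simp
    ring
  have E1 : fca N e0 = fca N' e0 := by
    have hlogeq : Real.log (fca N e0) = Real.log (fca N' e0) := by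
      rw [log_fca hN0, log_fca hN'0]
      nlinarith [hE0]
    rw [← Real.exp_log (fca_pos hN0 e0), ← Real.exp_log (fca_pos hN'0 e0), hlogeq]
  have E2a : e0 < ε := by
    have hl := Real.log_lt_log (fca_pos hN'0 ε) P1
    rw [log_fca hN0, log_fca hN'0] at hl
    nlinarith [hE0]
  have E2b : ε' < e0 := by
    have hl := Real.log_lt_log (fca_pos hN0 ε') P2
    rw [log_fca hN0, log_fca hN'0] at hl
    nlinarith [hE0]
  -- Strong claim: no odd number strictly between can beat N at e0
  have SC : ∀ k : ℕ, Odd k → N < k → k < N' → fca k e0 ≤ fca N e0 := by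
    intro n hnodd hNn hnN'
    by_contra hcon
    push_neg at hcon
    have hn0 : n ≠ 0 := by omega
    have hn3 : 3 ≤ n := by omega
    set U : Set ℝ := {e | fca N e < fca n e} ∩ ({e | fca N' e < fca n e} ∩
      ({e | ε' < e} ∩ {e | e < ε})) with hUdef
    have hUopen : IsOpen U := by
      refine (isOpen_lt (fca_continuous hN0) (fca_continuous hn0)).inter
        ((isOpen_lt (fca_continuous hN'0) (fca_continuous hn0)).inter
          ((isOpen_lt continuous_const continuous_id).inter
            (isOpen_lt continuous_id continuous_const)))
    have he0U : e0 ∈ U :=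
      ⟨hcon, by rw [Set.mem_setOf_eq, ← E1]; exact hcon, E2b, E2a⟩
    obtain ⟨a, b, he0ab, habU⟩ := mem_nhds_iff_exists_Ioo_subset.mp (hUopen.mem_nhds he0U)
    have hab : a < b := lt_trans he0ab.1 he0ab.2
    -- lower bound for the eventual maximum
    set c : ℝ := fca n b with hcdef
    have hc : 0 < c := fca_pos hn0 b
    obtain ⟨M0, hM0⟩ := fca_tail hε' hc
    set M : ℕ := max M0 n with hMdef
    set F : Finset ℕ := (Finset.range (M+1)).filter (fun k => k % 2 = 1 ∧ 3 ≤ k) with hFdef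
    have hnF : n ∈ F := by
      rw [hFdef, Finset.mem_filter, Finset.mem_range]
      exact ⟨by omega, Nat.odd_iff.mp hnodd, hn3⟩
    set T : Finset ℝ := Finset.image
      (fun p : ℕ × ℕ => (Real.log (sigma p.1) - Real.log (sigma p.2)) /
        (Real.log p.1 - Real.log p.2) - 1) (F ×ˢ F) with hTdef
    obtain ⟨e, heab, heT⟩ := (Set.Ioo_infinite hab).exists_notMem_finset T
    obtain ⟨hNe, hN'e, hε'e, heε⟩ := habU heab
    rw [Set.mem_setOf_eq] at hNe hN'e hε'e heε
    obtain ⟨m, hmF, hmax⟩ := F.exists_max_image (fun k => fca k e) ⟨n, hnF⟩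
    have hmdata := (Finset.mem_filter.mp hmF)
    have hm3 : 3 ≤ m := hmdata.2.2
    have hmodd : Odd m := Nat.odd_iff.mpr hmdata.2.1
    have hm0 : m ≠ 0 := by omega
    have hnm : fca n e ≤ fca m e := hmax n hnF
    have hNm : fca N e < fca m e := lt_of_lt_of_le hNe hnm
    have hN'm : fca N' e < fca m e := lt_of_lt_of_le hN'e hnm
    -- m is a strict maximizer at exponent e
    have hstrict : ∀ k : ℕ, Odd k → 3 ≤ k → k ≠ m → fca k e < fca m e := by
      intro k hko hk3 hkm
      have hk0 : k ≠ 0 := by omega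
      by_cases hkF : k ∈ F
      · refine lt_of_le_of_ne (hmax k hkF) ?_
        intro heq
        apply heT
        rw [hTdef]
        refine Finset.mem_image.mpr ⟨(k, m), Finset.mem_product.mpr ⟨hkF, hmF⟩, ?_⟩
        have hkR : (0:ℝ) < k := Nat.cast_pos.mpr (by omega)
        have hmR : (0:ℝ) < m := Nat.cast_pos.mpr (by omega)
        have hlog : Real.log (sigma k) - (1 + e) * Real.log k
            = Real.log (sigma m) - (1 + e) * Real.log m := by
          rw [← log_fca hk0, ← log_fca hm0, heq]
        have hklm : Real.log (k:ℝ) ≠ Real.log (m:ℝ) := by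
          intro h
          apply hkm
          have : (k:ℝ) = m := by
            rw [← Real.exp_log hkR, h, Real.exp_log hmR]
          exact_mod_cast this
        have hnum : Real.log (sigma k) - Real.log (sigma m)
            = (1 + e) * (Real.log k - Real.log m) := by linarith
        rw [hnum]
        field_simp [sub_ne_zero.mpr hklm]
        ring
      · have hkM : M < k := by
          by_contra h
          push_neg at h
          exact hkF (by
            rw [hFdef, Finset.mem_filter, Finset.mem_range]
            exact ⟨by omega, Nat.odd_iff.mp hko, hk3⟩)
        have ht := hM0 k (by omega)
        have hk1 : 1 ≤ k := by omega
        have hA1 : fca k e ≤ fca k ε' := fca_anti hk1 hε'e.le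
        have hA2 : fca n b ≤ fca n e := fca_anti (by omega) heab.2.le
        calc fca k e ≤ fca k ε' := hA1
          _ < c := ht
          _ = fca n b := hcdef
          _ ≤ fca n e := hA2
          _ ≤ fca m e := hnm
    have hmCA : OddColossallyAbundant m :=
      ⟨hmodd, hm3, e, lt_trans hε' hε'e, hstrict⟩
    -- locate m strictly between N and N'
    have hNltm : N < m := by
      rcases lt_trichotomy m N with h | h | h
      · have := fca_lt_of_le hm0 h.le heε.le (hCA m hmodd hm3 (by omega))
        linarith
      · subst h; linarith
      · exact h
    have hmltN' : m < N' := by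
      rcases lt_trichotomy m N' with h | h | h
      · exact h
      · subst h; linarith
      · have := fca_lt_of_ge hN'0 h.le hε'e.le (hCA' m hmodd hm3 (by omega))
        linarith
    exact hcons m hNltm hmltN' hmCA
  -- final assembly
  intro n hnodd hNn hnN'
  rcases eq_or_lt_of_le hNn with hEq | hlt1
  · rw [← hEq]; exact h1
  rcases eq_or_lt_of_le hnN' with hEq | hlt2
  · rw [hEq]; exact h2
  have hSC : fca n e0 ≤ fca N e0 := SC n hnodd hlt1 hlt2
  have hn0 : n ≠ 0 := by omega
  have hn0R : (0:ℝ) < n := Nat.cast_pos.mpr (by omega)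
  set s0 : ℝ := Real.log N with hs0def
  set s1 : ℝ := Real.log N' with hs1def
  set s : ℝ := Real.log n with hsdef
  have hs0pos : 0 < s0 := Real.log_pos (by exact_mod_cast (by omega : 1 < N))
  have hs01 : s0 < s := Real.log_lt_log hN0R (by exact_mod_cast hlt1)
  have hs1' : s < s1 := Real.log_lt_log hn0R (by exact_mod_cast hlt2)
  set B : ℝ := α * fca N e0 with hBdef
  have hB : 0 < B := mul_pos hα (fca_pos hN0 e0)
  -- rewriting σ(x)/x in terms of fca and exp
  have hrw : ∀ (k : ℕ), k ≠ 0 →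
      (sigma k : ℝ) / k = fca k e0 * Real.exp (e0 * Real.log k) := by
    intro k hk0
    have hkR : (0:ℝ) < k := Nat.cast_pos.mpr (by omega)
    rw [fca, Real.rpow_def_of_pos hkR]
    have hexp : Real.exp (Real.log (k:ℝ) * (1 + e0)) = k * Real.exp (e0 * Real.log k) := by
      rw [show Real.log (k:ℝ) * (1 + e0) = Real.log (k:ℝ) + e0 * Real.log (k:ℝ) by ring,
        Real.exp_add, Real.exp_log hkR]
    rw [hexp]
    rw [div_mul_eq_mul_div, div_eq_div_iff hkR.ne' (by positivity)]
    ring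
  have key1 : α * ((sigma n : ℝ) / n) ≤ B * Real.exp (e0 * s) := by
    rw [hrw n hn0, hBdef, hsdef]
    have hstep : fca n e0 * Real.exp (e0 * Real.log (n:ℝ))
        ≤ fca N e0 * Real.exp (e0 * Real.log (n:ℝ)) :=
      mul_le_mul_of_nonneg_right hSC (Real.exp_pos _).le
    calc α * (fca n e0 * Real.exp (e0 * Real.log (n:ℝ)))
        ≤ α * (fca N e0 * Real.exp (e0 * Real.log (n:ℝ))) :=
          mul_le_mul_of_nonneg_left hstep hα.le
      _ = α * fca N e0 * Real.exp (e0 * Real.log (n:ℝ)) := by ring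
  have key2 : B * Real.exp (e0 * s0) = α * ((sigma N : ℝ) / N) := by
    rw [hrw N hN0, hBdef, hs0def]; ring
  have key3 : B * Real.exp (e0 * s1) = α * ((sigma N' : ℝ) / N') := by
    rw [hrw N' hN'0, hBdef, hs1def, E1]; ring
  have hden : s1 - s0 ≠ 0 := by linarith
  set ca : ℝ := (s1 - s) / (s1 - s0) with hcadef
  set cb : ℝ := (s - s0) / (s1 - s0) with hcbdef
  have hca : 0 ≤ ca := by rw [hcadef]; apply div_nonneg <;> linarith
  have hcb : 0 ≤ cb := by rw [hcbdef]; apply div_nonneg <;> linarith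
  have hab1 : ca + cb = 1 := by rw [hcadef, hcbdef]; field_simp; ring
  have hcomb : ca * s0 + cb * s1 = s := by
    rw [hcadef, hcbdef]; field_simp; ring
  have hspos : 0 < s := lt_trans hs0pos hs01
  have hs1pos : 0 < s1 := lt_trans hspos hs1'
  have hlogconc : ca * Real.log s0 + cb * Real.log s1 ≤ Real.log s := by
    have h := strictConcaveOn_log_Ioi.concaveOn.2 (Set.mem_Ioi.mpr hs0pos)
      (Set.mem_Ioi.mpr hs1pos) hca hcb hab1
    simp only [smul_eq_mul] at h
    rwa [hcomb] at h
  have hexpconv : Real.exp (e0 * s) ≤ ca * Real.exp (e0 * s0) + cb * Real.exp (e0 * s1) := by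
    have h := convexOn_exp.2 (Set.mem_univ (e0 * s0)) (Set.mem_univ (e0 * s1)) hca hcb hab1
    simp only [smul_eq_mul] at h
    have heq : ca * (e0 * s0) + cb * (e0 * s1) = e0 * s := by
      rw [← hcomb]; ring
    rwa [heq] at h
  have c1 : B * Real.exp (e0 * s)
      ≤ ca * (B * Real.exp (e0 * s0)) + cb * (B * Real.exp (e0 * s1)) := by
    calc B * Real.exp (e0 * s)
        ≤ B * (ca * Real.exp (e0 * s0) + cb * Real.exp (e0 * s1)) :=
          mul_le_mul_of_nonneg_left hexpconv hB.le
      _ = ca * (B * Real.exp (e0 * s0)) + cb * (B * Real.exp (e0 * s1)) := by ring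
  have c2 : ca * (α * ((sigma N : ℝ) / N)) ≤ ca * (A * Real.log s0) :=
    mul_le_mul_of_nonneg_left h1 hca
  have c3 : cb * (α * ((sigma N' : ℝ) / N')) ≤ cb * (A * Real.log s1) :=
    mul_le_mul_of_nonneg_left h2 hcb
  have c4 : A * (ca * Real.log s0 + cb * Real.log s1) ≤ A * Real.log s :=
    mul_le_mul_of_nonneg_left hlogconc hA.le
  calc α * ((sigma n : ℝ) / n) ≤ B * Real.exp (e0 * s) := key1
    _ ≤ ca * (B * Real.exp (e0 * s0)) + cb * (B * Real.exp (e0 * s1)) := c1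
    _ = ca * (α * ((sigma N : ℝ) / N)) + cb * (α * ((sigma N' : ℝ) / N')) := by
        rw [key2, key3]
    _ ≤ ca * (A * Real.log s0) + cb * (A * Real.log s1) := add_le_add c2 c3
    _ = A * (ca * Real.log s0 + cb * Real.log s1) := by ring
    _ ≤ A * Real.log s := c4
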